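/- Let (E, ‖·‖) be a two-dimensional real normed space with unit sphere S, and let v1, v2, v3 = v2 - v1 be unit vectors forming an inscribed affine regular hexagon. If x is a unit vector of the form x = λ v1 + μ v2 with λ, μ ≥ 0 (i.e., x lies on the arc [v1, v2] of S), then ‖x - v1‖ + ‖x + v1‖ ≤ 3. -/

import Mathlib

theorem stmt_18 (E : Type*) [NormedAddCommGroup E] [NormedSpace ℝ E]
    (hdim : Module.finrank ℝ E = 2)
    (v₁ v₂ : E) (hv₁ : ‖v₁‖ = 1) (hv₂ : ‖v₂‖ = 1) (hv₃ : ‖v₂ - v₁‖ = 1)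
    (x : E) (hx : ‖x‖ = 1)
    (harc : ∃ lam mu : ℝ, 0 ≤ lam ∧ 0 ≤ mu ∧ x = lam • v₁ + mu • v₂) :
    ‖x - v₁‖ + ‖x + v₁‖ ≤ 3 := by
  obtain ⟨lam, mu, hlam, hmu, hxe⟩ := harc
  have hv1ne : v₁ ≠ 0 := by
    intro h; rw [h, norm_zero] at hv₁; linarith
  have hv2ne : v₂ ≠ 0 := by
    intro h; rw [h, norm_zero] at hv₂; linarith
  obtain ⟨f, hf, hfv2⟩ := exists_dual_vector ℝ v₂ (norm_ne_zero_iff.mpr hv2ne)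
  obtain ⟨g, hg, hgv1⟩ := exists_dual_vector ℝ v₁ (norm_ne_zero_iff.mpr hv1ne)
  rw [hv₂] at hfv2
  rw [hv₁] at hgv1
  -- f v₁ ≥ 0
  have hf21 : f (v₂ - v₁) ≤ 1 := by
    calc f (v₂ - v₁) ≤ ‖f (v₂ - v₁)‖ := by rw [Real.norm_eq_abs]; exact le_abs_self _
    _ ≤ ‖f‖ * ‖v₂ - v₁‖ := f.le_opNorm _
    _ = 1 := by rw [hf, hv₃]; ring
  have hfv1 : 0 ≤ f v₁ := by
    have : f (v₂ - v₁) = f v₂ - f v₁ := map_sub f v₂ v₁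
    rw [this, hfv2] at hf21
    norm_num at hf21 ⊢
    linarith
  -- g v₂ ≥ 0
  have hg12 : g (v₁ - v₂) ≤ 1 := by
    calc g (v₁ - v₂) ≤ ‖g (v₁ - v₂)‖ := by rw [Real.norm_eq_abs]; exact le_abs_self _
    _ ≤ ‖g‖ * ‖v₁ - v₂‖ := g.le_opNorm _
    _ = 1 := by rw [hg, norm_sub_rev, hv₃]; ring
  have hgv2 : 0 ≤ g v₂ := by
    have : g (v₁ - v₂) = g v₁ - g v₂ := map_sub g v₁ v₂
    rw [this, hgv1] at hg12
    norm_num at hg12 ⊢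
    linarith
  -- f x ≤ 1 and g x ≤ 1
  have hfx : f x ≤ 1 := by
    calc f x ≤ ‖f x‖ := by rw [Real.norm_eq_abs]; exact le_abs_self _
    _ ≤ ‖f‖ * ‖x‖ := f.le_opNorm _
    _ = 1 := by rw [hf, hx]; ring
  have hgx : g x ≤ 1 := by
    calc g x ≤ ‖g x‖ := by rw [Real.norm_eq_abs]; exact le_abs_self _
    _ ≤ ‖g‖ * ‖x‖ := g.le_opNorm _
    _ = 1 := by rw [hg, hx]; ring
  -- mu ≤ 1
  have hmu1 : mu ≤ 1 := by
    have hfx' : f x = lam * f v₁ + mu * f v₂ := by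
      rw [hxe]; simp [map_add, map_smul]
    rw [hfx', hfv2] at hfx
    norm_num at hfx
    nlinarith [mul_nonneg hlam hfv1]
  -- lam ≤ 1
  have hlam1 : lam ≤ 1 := by
    have hgx' : g x = lam * g v₁ + mu * g v₂ := by
      rw [hxe]; simp [map_add, map_smul]
    rw [hgx', hgv1] at hgx
    norm_num at hgx
    nlinarith [mul_nonneg hmu hgv2]
  -- key bound : ‖x - v₁‖ ≤ 1
  have hkey : ‖x - v₁‖ ≤ 1 := by
    rcases le_or_gt (lam + mu) 1 with hs | hs
    · -- x - v₁ = mu • (v₂ - v₁) + (lam + mu - 1) • v₁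
      have hdecomp : x - v₁ = mu • (v₂ - v₁) + (lam + mu - 1) • v₁ := by
        rw [hxe]; module
      calc ‖x - v₁‖ = ‖mu • (v₂ - v₁) + (lam + mu - 1) • v₁‖ := by rw [hdecomp]
      _ ≤ ‖mu • (v₂ - v₁)‖ + ‖(lam + mu - 1) • v₁‖ := norm_add_le _ _
      _ = |mu| * ‖v₂ - v₁‖ + |lam + mu - 1| * ‖v₁‖ := by
          rw [norm_smul, norm_smul, Real.norm_eq_abs, Real.norm_eq_abs]
      _ = mu + (1 - (lam + mu)) := by
          rw [hv₁, hv₃, abs_of_nonneg hmu, abs_of_nonpos (by linarith)]; ring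
      _ ≤ 1 := by linarith
    · -- x - v₁ = (lam + mu - 1) • v₂ + (1 - lam) • (v₂ - v₁)
      have hdecomp : x - v₁ = (lam + mu - 1) • v₂ + (1 - lam) • (v₂ - v₁) := by
        rw [hxe]; module
      calc ‖x - v₁‖ = ‖(lam + mu - 1) • v₂ + (1 - lam) • (v₂ - v₁)‖ := by rw [hdecomp]
      _ ≤ ‖(lam + mu - 1) • v₂‖ + ‖(1 - lam) • (v₂ - v₁)‖ := norm_add_le _ _
      _ = |lam + mu - 1| * ‖v₂‖ + |1 - lam| * ‖v₂ - v₁‖ := by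
          rw [norm_smul, norm_smul, Real.norm_eq_abs, Real.norm_eq_abs]
      _ = (lam + mu - 1) + (1 - lam) := by
          rw [hv₂, hv₃, abs_of_nonneg (by linarith), abs_of_nonneg (by linarith)]; ring
      _ = mu := by ring
      _ ≤ 1 := hmu1
  have h2 : ‖x + v₁‖ ≤ 2 := by
    calc ‖x + v₁‖ ≤ ‖x‖ + ‖v₁‖ := norm_add_le _ _
    _ = 2 := by rw [hx, hv₁]; norm_num
  linarith
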